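/- Let (V, ω) be a finite-dimensional symplectic vector space with a linear map Φ : V → V satisfying Φ² = Id and Φ*ω = −ω. Let g be a positive definite symmetric bilinear form on V with Φ*g = g. Define A : V → V by ω(v, w) = g(Av, w), and let Q be the unique g-self-adjoint, g-positive-definite square root of A*A (with A* the g-adjoint). Then J := Q⁻¹A is an ω-compatible complex structure on V (J² = −Id, ω(Jv, Jw) = ω(v, w), ω(v, Jv) > 0 for v ≠ 0) which satisfies ΦJ = −JΦ. -/

import Mathlib

/-- Uniqueness of the positive self-adjoint square root. -/
lemma sqrt_unique {V : Type*} [AddCommGroup V] [Module ℝ V] [FiniteDimensional ℝ V]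
    (g : V →ₗ[ℝ] V →ₗ[ℝ] ℝ)
    (hgsymm : ∀ v w, g v w = g w v)
    (hgpos : ∀ v, v ≠ 0 → 0 < g v v)
    (P R : V →ₗ[ℝ] V)
    (hPsa : ∀ v w, g (P v) w = g v (P w))
    (hRsa : ∀ v w, g (R v) w = g v (R w))
    (hPpos : ∀ v, v ≠ 0 → 0 < g (P v) v)
    (hRpos : ∀ v, v ≠ 0 → 0 < g (R v) v)
    (hsq : P ∘ₗ P = R ∘ₗ R) : P = R := by
  classical
  set D : V →ₗ[ℝ] V := P - R with hD
  set S : V →ₗ[ℝ] V := P + R with hS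
  have hsq' : ∀ v, P (P v) = R (R v) := fun v => by
    simpa using LinearMap.ext_iff.mp hsq v
  have hanti : S * D = - (D * S) := by
    ext v
    simp only [Module.End.mul_apply, LinearMap.neg_apply, hD, hS, LinearMap.sub_apply,
      LinearMap.add_apply, map_add, map_sub]
    rw [hsq' v]
    abel
  have hDsa : ∀ v w, g (D v) w = g v (D w) := by
    intro v w
    simp only [hD, LinearMap.sub_apply, map_sub, LinearMap.sub_apply, hPsa, hRsa]
  have hSnn : ∀ x, 0 ≤ g (S x) x := by
    intro x
    rcases eq_or_ne x 0 with rfl | hx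
    · simp
    · have h1 := hPpos x hx
      have h2 := hRpos x hx
      simp only [hS, LinearMap.add_apply, map_add, LinearMap.add_apply]
      linarith
  have hSpos : ∀ x, x ≠ 0 → 0 < g (S x) x := by
    intro x hx
    have h1 := hPpos x hx
    have h2 := hRpos x hx
    simp only [hS, LinearMap.add_apply, map_add, LinearMap.add_apply]
    linarith
  set M : V →ₗ[ℝ] V := D * (S * D) with hM
  have hMform : ∀ v, g (M v) v = g (S (D v)) (D v) := by
    intro v
    rw [hM]
    simp only [Module.End.mul_apply]
    rw [hDsa, hgsymm]
  have htr : LinearMap.trace ℝ V M = 0 := by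
    have h1 : LinearMap.trace ℝ V (D * (S * D)) = LinearMap.trace ℝ V ((S * D) * D) :=
      LinearMap.trace_mul_comm ℝ D (S * D)
    have h2 : (S * D) * D = - (D * (S * D)) := by
      conv_lhs => rw [hanti]
      rw [neg_mul, mul_assoc]
    rw [h2, map_neg] at h1
    have : LinearMap.trace ℝ V (D * (S * D)) = 0 := by linarith
    simpa [hM] using this
  have hgs : g.IsSymm := LinearMap.isSymm_def.mpr (by intro x y; simpa using hgsymm x y)
  obtain ⟨b, hb⟩ := LinearMap.BilinForm.exists_orthogonal_basis hgs
  -- diagonal entries of M in basis b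
  have key : ∀ j, (LinearMap.toMatrix b b M) j j * g (b j) (b j) = g (M (b j)) (b j) := by
    intro j
    conv_rhs => rw [← b.sum_repr (M (b j))]
    rw [map_sum]
    simp only [map_smul, LinearMap.sum_apply, LinearMap.smul_apply, smul_eq_mul]
    rw [Finset.sum_eq_single j]
    · rw [LinearMap.toMatrix_apply]
    · intro i _ hij
      rw [show g (b i) (b j) = 0 from hb hij, mul_zero]
    · intro h; exact absurd (Finset.mem_univ j) h
  have hdiagnn : ∀ j, 0 ≤ (LinearMap.toMatrix b b M) j j := by
    intro j
    have hk := key j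
    have h1 : 0 ≤ g (M (b j)) (b j) := by rw [hMform]; exact hSnn _
    have h2 : 0 < g (b j) (b j) := hgpos _ (b.ne_zero j)
    nlinarith
  have hdiag0 : ∀ j, (LinearMap.toMatrix b b M) j j = 0 := by
    have hsum : ∑ j, (LinearMap.toMatrix b b M) j j = 0 := by
      rw [LinearMap.trace_eq_matrix_trace ℝ b M] at htr
      simpa [Matrix.trace, Matrix.diag] using htr
    intro j
    exact (Finset.sum_eq_zero_iff_of_nonneg (fun i _ => hdiagnn i)).mp hsum j
      (Finset.mem_univ j)
  have hDb : ∀ j, D (b j) = 0 := by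
    intro j
    by_contra h
    have h1 : g (M (b j)) (b j) = 0 := by
      rw [← key j, hdiag0 j, zero_mul]
    rw [hMform] at h1
    exact absurd h1 (ne_of_gt (hSpos _ h))
  have hD0 : D = 0 := b.ext fun i => by rw [hDb i]; rfl
  have : P - R = 0 := hD0
  linear_combination (norm := module) this

/-- Let `(V, ω)` be a finite-dimensional symplectic vector space with a linear
map `Φ` satisfying `Φ² = Id` and `Φ*ω = −ω`.  Let `g` be a `Φ`-invariant inner product, let
`A` be defined by `ω(v, w) = g(Av, w)`, and let `Q` be the `g`-self-adjoint, `g`-positive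
definite square root of `A*A`.  Then `J := Q⁻¹A` is an `ω`-compatible complex structure
(`J² = −Id`, `ω(Jv, Jw) = ω(v, w)`, `ω(v, Jv) > 0` for `v ≠ 0`) and `ΦJ = −JΦ`. -/
theorem stmt2 {V : Type*} [AddCommGroup V] [Module ℝ V] [FiniteDimensional ℝ V]
    (ω g : V →ₗ[ℝ] V →ₗ[ℝ] ℝ)
    (hωskew : ∀ v w, ω v w = - ω w v)
    (hωnondeg : ∀ v, (∀ w, ω v w = 0) → v = 0)
    (hgsymm : ∀ v w, g v w = g w v)
    (hgpos : ∀ v, v ≠ 0 → 0 < g v v)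
    (Φ : V →ₗ[ℝ] V) (hΦ2 : Φ ∘ₗ Φ = LinearMap.id)
    (hΦω : ∀ v w, ω (Φ v) (Φ w) = - ω v w)
    (hΦg : ∀ v w, g (Φ v) (Φ w) = g v w)
    (A : V →ₗ[ℝ] V) (hA : ∀ v w, ω v w = g (A v) w)
    (Astar : V →ₗ[ℝ] V) (hAstar : ∀ v w, g (A v) w = g v (Astar w))
    (Q : V →ₗ[ℝ] V)
    (hQsa : ∀ v w, g (Q v) w = g v (Q w))
    (hQpos : ∀ v, v ≠ 0 → 0 < g (Q v) v)
    (hQsq : Q ∘ₗ Q = Astar ∘ₗ A)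
    (J : V →ₗ[ℝ] V) (hQJ : Q ∘ₗ J = A) :
    (J ∘ₗ J = - LinearMap.id) ∧
    (∀ v w, ω (J v) (J w) = ω v w) ∧
    (∀ v, v ≠ 0 → 0 < ω v (J v)) ∧
    (Φ ∘ₗ J = - (J ∘ₗ Φ)) := by
  classical
  have hnd : ∀ x : V, (∀ w, g x w = 0) → x = 0 := by
    intro x hx
    by_contra h
    exact absurd (hx x) (ne_of_gt (hgpos x h))
  have hΦ2' : ∀ v, Φ (Φ v) = v := fun v => by
    simpa using LinearMap.ext_iff.mp hΦ2 v
  have hQsq' : ∀ v, Q (Q v) = Astar (A v) := fun v => by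
    simpa using LinearMap.ext_iff.mp hQsq v
  have hQJ' : ∀ v, Q (J v) = A v := fun v => by
    simpa using LinearMap.ext_iff.mp hQJ v
  -- A is g-skew
  have gA : ∀ v w, g (A v) w = - g v (A w) := by
    intro v w
    calc g (A v) w = ω v w := (hA v w).symm
      _ = - ω w v := hωskew v w
      _ = - g (A w) v := by rw [hA]
      _ = - g v (A w) := by rw [hgsymm]
  -- Astar = -A
  have hAstar' : ∀ w, Astar w = - A w := by
    intro w
    have h0 : ∀ u, g (Astar w + A w) u = 0 := by
      intro u
      rw [hgsymm, map_add]
      have h1 : g u (Astar w) = g (A u) w := (hAstar u w).symm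
      have h2 : g (A u) w = - g u (A w) := gA u w
      rw [h1, h2]
      ring
    exact eq_neg_of_add_eq_zero_left (hnd _ h0)
  -- Q² = -A²
  have hAA' : ∀ v, A (A v) = - Q (Q v) := by
    intro v
    rw [hQsq' v, hAstar', neg_neg]
  -- injectivity / surjectivity
  have hQinj0 : ∀ x, Q x = 0 → x = 0 := by
    intro x hx
    by_contra h
    have := hQpos x h
    rw [hx] at this
    simp at this
  have hQinj : Function.Injective Q := by
    intro x y hxy
    have := hQinj0 (x - y) (by rw [map_sub, hxy, sub_self])
    exact sub_eq_zero.mp this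
  have hAinj0 : ∀ x, A x = 0 → x = 0 := by
    intro x hx
    refine hωnondeg x (fun w => ?_)
    rw [hA, hx]
    simp
  have hAinj : Function.Injective A := by
    intro x y hxy
    have := hAinj0 (x - y) (by rw [map_sub, hxy, sub_self])
    exact sub_eq_zero.mp this
  have hAsurj : Function.Surjective A := LinearMap.injective_iff_surjective.mp hAinj
  have hQsurj : Function.Surjective Q := LinearMap.injective_iff_surjective.mp hQinj
  -- the inverse of A
  set eA : V ≃ₗ[ℝ] V := LinearEquiv.ofBijective A ⟨hAinj, hAsurj⟩ with heAdef
  have hcoe : ∀ x, eA x = A x := fun x => rfl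
  have heAs : ∀ a, eA.symm (A a) = a := fun a => by
    rw [← hcoe]; exact eA.symm_apply_apply a
  -- Rm = A Q A⁻¹  is a positive self-adjoint square root of Q²
  set Rm : V →ₗ[ℝ] V := A ∘ₗ (Q ∘ₗ (eA.symm : V →ₗ[ℝ] V)) with hRmdef
  have hRmapp : ∀ a, Rm (A a) = A (Q a) := by
    intro a
    show A (Q (eA.symm (A a))) = A (Q a)
    rw [heAs]
  have hRmsa : ∀ v w, g (Rm v) w = g v (Rm w) := by
    intro v w
    obtain ⟨a, rfl⟩ := hAsurj v
    obtain ⟨b, rfl⟩ := hAsurj w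
    rw [hRmapp, hRmapp]
    calc g (A (Q a)) (A b) = - g (Q a) (A (A b)) := gA _ _
      _ = - g (Q a) (- Q (Q b)) := by rw [hAA']
      _ = g (Q a) (Q (Q b)) := by rw [map_neg]; ring
      _ = g a (Q (Q (Q b))) := hQsa _ _
      _ = - g a (- Q (Q (Q b))) := by rw [map_neg]; ring
      _ = - g a (A (A (Q b))) := by rw [hAA']
      _ = g (A a) (A (Q b)) := (gA _ _).symm
  have hRmpos : ∀ v, v ≠ 0 → 0 < g (Rm v) v := by
    intro v hv
    obtain ⟨a, rfl⟩ := hAsurj v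
    have ha : a ≠ 0 := by rintro rfl; exact hv (map_zero A)
    have hQa : Q a ≠ 0 := fun h => ha (hQinj0 a h)
    rw [hRmapp]
    calc (0:ℝ) < g (Q (Q a)) (Q a) := hQpos _ hQa
      _ = g (Q a) (Q (Q a)) := hgsymm _ _
      _ = - g (Q a) (- Q (Q a)) := by rw [map_neg]; ring
      _ = - g (Q a) (A (A a)) := by rw [hAA']
      _ = g (A (Q a)) (A a) := (gA _ _).symm
  have hRmsq : Rm ∘ₗ Rm = Q ∘ₗ Q := by
    ext v
    show Rm (Rm v) = Q (Q v)
    have hv : A (eA.symm v) = v := by rw [← hcoe]; exact eA.apply_symm_apply v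
    conv_lhs => rw [← hv]
    rw [hRmapp, hRmapp]
    have hQQ : ∀ x : V, Q (Q x) = - A (A x) := fun x => by rw [hAA', neg_neg]
    rw [hQQ (eA.symm v), map_neg]
    conv_rhs => rw [← hv, hQQ]
  have hRmQ : Rm = Q :=
    sqrt_unique g hgsymm hgpos Rm Q hRmsa hQsa hRmpos hQpos hRmsq
  -- A and Q commute
  have hQA : ∀ a, A (Q a) = Q (A a) := by
    intro a
    rw [← hRmapp, hRmQ]
  have hQQ : ∀ x : V, Q (Q x) = - A (A x) := fun x => by rw [hAA', neg_neg]
  -- Φ moves through g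
  have gΦ : ∀ x y, g (Φ x) y = g x (Φ y) := by
    intro x y
    have := hΦg x (Φ y)
    rwa [hΦ2'] at this
  -- Φ anticommutes with A
  have hΦA0 : ∀ v, Φ (A (Φ v)) = - A v := by
    intro v
    refine eq_neg_of_add_eq_zero_left (hnd _ (fun w => ?_))
    rw [map_add, LinearMap.add_apply]
    have h1 : g (Φ (A (Φ v))) w = g (A (Φ v)) (Φ w) := gΦ _ _
    have h2 : g (A (Φ v)) (Φ w) = ω (Φ v) (Φ w) := (hA _ _).symm
    have h3 : ω (Φ v) (Φ w) = - ω v w := hΦω v w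
    have h4 : ω v w = g (A v) w := hA v w
    rw [h1, h2, h3, h4]
    ring
  have hΦA : ∀ v, Φ (A v) = - A (Φ v) := by
    intro v
    have := hΦA0 (Φ v)
    rwa [hΦ2'] at this
  have hΦinj0 : ∀ x, Φ x = 0 → x = 0 := by
    intro x hx
    have := hΦ2' x
    rw [hx, map_zero] at this
    exact this.symm
  -- Φ commutes with Q (again via uniqueness of the square root)
  set Pm : V →ₗ[ℝ] V := Φ ∘ₗ (Q ∘ₗ Φ) with hPmdef
  have hPmapp : ∀ v, Pm v = Φ (Q (Φ v)) := fun v => rfl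
  have hPmsa : ∀ v w, g (Pm v) w = g v (Pm w) := by
    intro v w
    rw [hPmapp, hPmapp, gΦ, hQsa, ← gΦ]
  have hPmpos : ∀ v, v ≠ 0 → 0 < g (Pm v) v := by
    intro v hv
    have hΦv : Φ v ≠ 0 := fun h => hv (hΦinj0 v h)
    rw [hPmapp, gΦ]
    exact hQpos _ hΦv
  have hPmsq : Pm ∘ₗ Pm = Q ∘ₗ Q := by
    ext v
    show Pm (Pm v) = Q (Q v)
    rw [hPmapp, hPmapp, hΦ2']
    rw [hQQ (Φ v), map_neg, hΦA, hΦA, hΦ2', hQQ v]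
    simp only [map_neg, neg_neg]
  have hPmQ : Pm = Q :=
    sqrt_unique g hgsymm hgpos Pm Q hPmsa hQsa hPmpos hQpos hPmsq
  have hΦQ : ∀ v, Φ (Q v) = Q (Φ v) := by
    intro v
    have : Pm (Φ v) = Q (Φ v) := by rw [hPmQ]
    rw [hPmapp, hΦ2'] at this
    exact this
  -- J commutes with Q
  have hJQ : ∀ v, J (Q v) = Q (J v) := by
    intro v
    apply hQinj
    rw [hQJ' (Q v), hQA v, ← hQJ' v]
  have hJJ : ∀ v, J (J v) = - v := by
    intro v
    apply hQinj
    apply hQinj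
    rw [hQJ' (J v), ← hQA, hQJ' v, hAA', map_neg, map_neg]
  -- J is g-skew
  have hJadj : ∀ v w, g (J v) w = - g v (J w) := by
    intro v w
    obtain ⟨u, rfl⟩ := hQsurj w
    have h1 : g (J v) (Q u) = g (Q (J v)) u := by rw [hQsa]
    rw [h1, hQJ' v, gA, hJQ, ← hQJ' u]
  refine ⟨?_, ?_, ?_, ?_⟩
  · ext v
    simp [LinearMap.comp_apply, hJJ v]
  · intro v w
    have hAJ : ∀ u, A (J u) = J (A u) := by
      intro u
      rw [← hQJ' u, hJQ, hQJ' (J u)]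
    calc ω (J v) (J w) = g (A (J v)) (J w) := hA _ _
      _ = g (J (A v)) (J w) := by rw [hAJ]
      _ = - g (A v) (J (J w)) := hJadj _ _
      _ = - g (A v) (- w) := by rw [hJJ]
      _ = g (A v) w := by rw [map_neg]; ring
      _ = ω v w := (hA _ _).symm
  · intro v hv
    have hJv : J v ≠ 0 := by
      intro h
      have := hJJ v
      rw [h, map_zero] at this
      exact hv (by simpa using this.symm)
    rw [hA, ← hQJ' v]
    exact hQpos _ hJv
  · ext v
    simp only [LinearMap.comp_apply, LinearMap.neg_apply]
    apply hQinj
    rw [← hΦQ, hQJ' v, hΦA, map_neg, hQJ' (Φ v)]
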